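/- Let j₁ ≤ j₂ ≤ ⋯ ≤ j_{2n+1} be the sorted dyadic indices and suppose |η_k| ∈ [(5/8)2^{j_k}, (8/5)2^{j_k}] for k = 1, …, 2n+1. Then |𝐓_n(η₁,…,η_{2n+1})| = |∫_ℝ ∏_{k=1}^{2n+1}(1 − e^{iη_kζ}) |ζ|^{−(2n+1)} dζ| ≤ C(n) ∏_{k=1}^{2n} |η_k| · (1 + log(|η_{2n+1}|/|η_{2n}|)), where C(n) depends only on n. In particular, if |η_{2n}| and |η_{2n+1}| are comparable (|η_{2n+1}|/|η_{2n}| ≤ K), then |𝐓_n| ≤ C(n,K) ∏_{k=1}^{2n} |η_k|, i.e. 𝐓_n is bounded by the product of the 2n smallest frequencies. -/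

import Mathlib

open MeasureTheory Set

section helpers

lemma norm_one_sub_exp_le (x : ℝ) :
    ‖(1 : ℂ) - Complex.exp (Complex.I * x)‖ ≤ 2 * min |x| 1 := by
  rcases le_or_gt |x| 1 with h | h
  · have h1 : ‖Complex.I * x‖ ≤ 1 := by
      simpa using h
    have h2 := Complex.norm_exp_sub_one_le h1
    rw [min_eq_left h]
    calc ‖(1:ℂ) - Complex.exp (Complex.I * x)‖
        = ‖Complex.exp (Complex.I * x) - 1‖ := by
          rw [norm_sub_rev]
      _ ≤ 2 * ‖Complex.I * x‖ := h2
      _ = 2 * |x| := by simp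
  · rw [min_eq_right h.le]
    have he : ‖Complex.exp (Complex.I * x)‖ = 1 := by
      rw [Complex.norm_exp]
      simp
    calc ‖(1:ℂ) - Complex.exp (Complex.I * x)‖
        ≤ ‖(1:ℂ)‖ + ‖Complex.exp (Complex.I * x)‖ := norm_sub_le _ _
      _ = 2 := by rw [he]; norm_num
      _ ≤ 2 * 1 := by norm_num

lemma core_bound {m M : ℝ} (hm : 0 < m) (hmM : m ≤ M) :
    ∃ H : ℝ → ℝ,
      (∀ ζ : ℝ, min (m * |ζ|) 1 * min (M * |ζ|) 1 / ζ ^ 2 ≤ H ζ) ∧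
      Integrable H ∧
      ∫ ζ : ℝ, H ζ ≤ 4 * m * (1 + Real.log (M / m)) := by
  have hM : 0 < M := hm.trans_le hmM
  set c1 : ℝ := M⁻¹ with hc1def
  set c2 : ℝ := m⁻¹ with hc2def
  have hc1 : 0 < c1 := by positivity
  have hc2 : 0 < c2 := by positivity
  have hc12 : c1 ≤ c2 := by
    exact inv_anti₀ hm hmM
  set g1 : ℝ → ℝ := Set.indicator (Set.Icc (-c1) c1) (fun _ => m * M) with hg1def
  set g2 : ℝ → ℝ := Set.indicator (Set.Ioc c1 c2) (fun t => m / t) with hg2def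
  set g3 : ℝ → ℝ := Set.indicator (Set.Ioi c2) (fun t => t ^ (-2 : ℝ)) with hg3def
  have hg1n : ∀ ζ, 0 ≤ g1 ζ := fun ζ =>
    Set.indicator_nonneg (fun t _ => by positivity) ζ
  have hg2n : ∀ ζ, 0 ≤ g2 ζ := fun ζ =>
    Set.indicator_nonneg (fun t ht => div_nonneg hm.le (hc1.trans ht.1).le) ζ
  have hg3n : ∀ ζ, 0 ≤ g3 ζ := fun ζ =>
    Set.indicator_nonneg (fun t ht => Real.rpow_nonneg (hc2.trans ht).le _) ζ
  have hint1 : Integrable g1 := by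
    rw [hg1def, integrable_indicator_iff measurableSet_Icc]
    exact integrableOn_const measure_Icc_lt_top.ne
  have hint2 : Integrable g2 := by
    rw [hg2def, integrable_indicator_iff measurableSet_Ioc]
    have hcont : ContinuousOn (fun t : ℝ => m / t) (Set.Icc c1 c2) :=
      ContinuousOn.div continuousOn_const continuousOn_id
        (fun t ht => (hc1.trans_le ht.1).ne')
    exact (hcont.integrableOn_Icc).mono_set Set.Ioc_subset_Icc_self
  have hint3 : Integrable g3 := by
    rw [hg3def, integrable_indicator_iff measurableSet_Ioi]
    exact integrableOn_Ioi_rpow_of_lt (by norm_num) hc2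
  refine ⟨fun ζ => g1 ζ + g2 ζ + g2 (-ζ) + g3 ζ + g3 (-ζ), ?_, ?_, ?_⟩
  · intro ζ
    rcases eq_or_ne ζ 0 with rfl | hz
    · simp only [abs_zero, mul_zero]
      have : min (0:ℝ) 1 * min (0:ℝ) 1 / (0:ℝ) ^ 2 = 0 := by norm_num
      rw [this]
      have := hg1n 0; have := hg2n 0; have := hg3n 0
      simp only [neg_zero]
      linarith
    · have hz2 : (0:ℝ) < ζ ^ 2 := by positivity
      have habs : 0 < |ζ| := abs_pos.mpr hz
      have hminm : (0:ℝ) ≤ min (m * |ζ|) 1 := le_min (by positivity) zero_le_one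
      have hminM : (0:ℝ) ≤ min (M * |ζ|) 1 := le_min (by positivity) zero_le_one
      rcases le_or_gt |ζ| c1 with h1 | h1
      · -- small region : bound by m*M = g1 ζ
        have key : min (m * |ζ|) 1 * min (M * |ζ|) 1 / ζ ^ 2 ≤ m * M := by
          rw [div_le_iff₀ hz2]
          have h2 : min (m * |ζ|) 1 * min (M * |ζ|) 1 ≤ (m * |ζ|) * (M * |ζ|) :=
            mul_le_mul (min_le_left _ _) (min_le_left _ _) hminM (by positivity)
          have h3 : (m * |ζ|) * (M * |ζ|) = m * M * ζ ^ 2 := by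
            rw [← sq_abs ζ]; ring
          linarith [h2, h3.le]
        have hmem : ζ ∈ Set.Icc (-c1) c1 := abs_le.mp h1
        have : g1 ζ = m * M := Set.indicator_of_mem hmem _
        linarith [hg2n ζ, hg2n (-ζ), hg3n ζ, hg3n (-ζ)]
      · rcases le_or_gt |ζ| c2 with h2 | h2
        · -- middle region : bound by m / |ζ|
          have key : min (m * |ζ|) 1 * min (M * |ζ|) 1 / ζ ^ 2 ≤ m / |ζ| := by
            rw [div_le_div_iff₀ hz2 habs]
            have hb : min (m * |ζ|) 1 * min (M * |ζ|) 1 ≤ (m * |ζ|) * 1 :=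
              mul_le_mul (min_le_left _ _) (min_le_right _ _) hminM (by positivity)
            have h3 : (m * |ζ|) * 1 * |ζ| = m * ζ ^ 2 := by
              rw [← sq_abs ζ]; ring
            calc min (m * |ζ|) 1 * min (M * |ζ|) 1 * |ζ|
                ≤ (m * |ζ|) * 1 * |ζ| := by nlinarith
              _ = m * ζ ^ 2 := h3
          rcases lt_or_gt_of_ne hz with hneg | hpos
          · have hmem : -ζ ∈ Set.Ioc c1 c2 := by
              constructor
              · rwa [abs_of_neg hneg] at h1
              · rwa [abs_of_neg hneg] at h2
            have hval : g2 (-ζ) = m / |ζ| := by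
              rw [hg2def, Set.indicator_of_mem hmem, abs_of_neg hneg]
            linarith [hg1n ζ, hg2n ζ, hg3n ζ, hg3n (-ζ)]
          · have hmem : ζ ∈ Set.Ioc c1 c2 := by
              constructor
              · rwa [abs_of_pos hpos] at h1
              · rwa [abs_of_pos hpos] at h2
            have hval : g2 ζ = m / |ζ| := by
              rw [hg2def, Set.indicator_of_mem hmem, abs_of_pos hpos]
            linarith [hg1n ζ, hg2n (-ζ), hg3n ζ, hg3n (-ζ)]
        · -- outer region : bound by 1/ζ^2
          have key : min (m * |ζ|) 1 * min (M * |ζ|) 1 / ζ ^ 2 ≤ 1 / ζ ^ 2 := by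
            rw [div_le_div_iff₀ hz2 hz2]
            have hb : min (m * |ζ|) 1 * min (M * |ζ|) 1 ≤ 1 :=
              mul_le_one₀ (min_le_right _ _) hminM (min_le_right _ _)
            nlinarith
          have hrpow : ∀ t : ℝ, 0 < t → t ^ (-2 : ℝ) = (t ^ 2)⁻¹ := by
            intro t ht
            rw [show (-2:ℝ) = -((2:ℕ):ℝ) by norm_num, Real.rpow_neg ht.le,
              Real.rpow_natCast]
          rcases lt_or_gt_of_ne hz with hneg | hpos
          · have hmem : -ζ ∈ Set.Ioi c2 := by
              rw [Set.mem_Ioi]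
              rw [abs_of_neg hneg] at h2
              exact h2
            have hval : g3 (-ζ) = 1 / ζ ^ 2 := by
              rw [hg3def, Set.indicator_of_mem hmem,
                hrpow _ (hc2.trans (Set.mem_Ioi.mp hmem)), neg_pow, one_div]
              norm_num
            linarith [hg1n ζ, hg2n ζ, hg2n (-ζ), hg3n ζ]
          · have hmem : ζ ∈ Set.Ioi c2 := by
              rw [Set.mem_Ioi]
              rw [abs_of_pos hpos] at h2
              exact h2
            have hval : g3 ζ = 1 / ζ ^ 2 := by
              rw [hg3def, Set.indicator_of_mem hmem, hrpow _ (hc2.trans hmem), one_div]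
            linarith [hg1n ζ, hg2n ζ, hg2n (-ζ), hg3n (-ζ)]
  · -- integrability
    exact ((((hint1.add hint2).add hint2.comp_neg).add hint3).add hint3.comp_neg)
  · -- integral value
    have hI1 : ∫ ζ : ℝ, g1 ζ = 2 * m := by
      rw [hg1def, integral_indicator_const _ measurableSet_Icc, measureReal_def, Real.volume_Icc]
      rw [show c1 - -c1 = 2 * c1 by ring, ENNReal.toReal_ofReal (by positivity)]
      rw [smul_eq_mul, hc1def]
      field_simp
    have hI2 : ∫ ζ : ℝ, g2 ζ = m * Real.log (M / m) := by
      rw [hg2def, integral_indicator measurableSet_Ioc,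
        ← intervalIntegral.integral_of_le hc12]
      have h0 : (0:ℝ) ∉ Set.uIcc c1 c2 := by
        rw [Set.uIcc_of_le hc12]
        intro h
        exact absurd h.1 (not_le.mpr hc1)
      calc ∫ t in c1..c2, m / t = ∫ t in c1..c2, m * t⁻¹ := by
            simp [div_eq_mul_inv]
        _ = m * ∫ t in c1..c2, t⁻¹ := intervalIntegral.integral_const_mul _ _
        _ = m * Real.log (c2 / c1) := by rw [integral_inv h0]
        _ = m * Real.log (M / m) := by
            congr 2
            rw [hc1def, hc2def]
            field_simp
    have hI3 : ∫ ζ : ℝ, g3 ζ = m := by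
      rw [hg3def, integral_indicator measurableSet_Ioi,
        integral_Ioi_rpow_of_lt (by norm_num) hc2]
      rw [show (-2:ℝ) + 1 = -1 by norm_num, Real.rpow_neg_one, hc2def, inv_inv]
      field_simp
    have hsplit : ∫ ζ : ℝ, (g1 ζ + g2 ζ + g2 (-ζ) + g3 ζ + g3 (-ζ))
        = (∫ ζ : ℝ, g1 ζ) + (∫ ζ : ℝ, g2 ζ) + (∫ ζ : ℝ, g2 (-ζ))
          + (∫ ζ : ℝ, g3 ζ) + (∫ ζ : ℝ, g3 (-ζ)) := by
      have A1 : Integrable (fun ζ : ℝ => g1 ζ + g2 ζ) := hint1.add hint2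
      have A2 : Integrable (fun ζ : ℝ => g1 ζ + g2 ζ + g2 (-ζ)) :=
        A1.add hint2.comp_neg
      have A3 : Integrable (fun ζ : ℝ => g1 ζ + g2 ζ + g2 (-ζ) + g3 ζ) :=
        A2.add hint3
      rw [integral_add A3 hint3.comp_neg, integral_add A2 hint3,
        integral_add A1 hint2.comp_neg, integral_add hint1 hint2]
    have hneg2 : ∫ ζ : ℝ, g2 (-ζ) = ∫ ζ : ℝ, g2 ζ := integral_neg_eq_self g2 _
    have hneg3 : ∫ ζ : ℝ, g3 (-ζ) = ∫ ζ : ℝ, g3 ζ := integral_neg_eq_self g3 _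
    have hlog : 0 ≤ Real.log (M / m) :=
      Real.log_nonneg ((one_le_div hm).mpr hmM)
    rw [hsplit, hneg2, hneg3, hI1, hI2, hI3]
    nlinarith

lemma log_64_25_lt_one : Real.log (64 / 25) < 1 := by
  rw [Real.log_lt_iff_lt_exp (by norm_num)]
  calc (64:ℝ)/25 < 2.7182818283 := by norm_num
    _ < Real.exp 1 := Real.exp_one_gt_d9

set_option maxHeartbeats 1000000 in
lemma main_est (n : ℕ) (hn : 1 ≤ n) (j : Fin (2 * n + 1) → ℤ) (η : Fin (2 * n + 1) → ℝ)
    (hj : Monotone j)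
    (hη : ∀ k, |η k| ∈ Set.Icc ((5 / 8 : ℝ) * 2 ^ j k) ((8 / 5 : ℝ) * 2 ^ j k)) :
    ‖∫ ζ : ℝ, (∏ k, (1 - Complex.exp (Complex.I * η k * ζ))) /
        ((|ζ| : ℝ) : ℂ) ^ (2 * n + 1)‖
      ≤ ((2:ℝ) ^ (2 * n + 1) * 4 * (2 / (1 - Real.log (64 / 25)))) *
          (∏ k ∈ Finset.univ.erase (Fin.last (2 * n)), |η k|) *
          (1 + Real.log (|η (Fin.last (2 * n))| / |η ⟨2 * n - 1, by clear hn; omega⟩|)) := by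
  set lst : Fin (2 * n + 1) := Fin.last (2 * n) with hlstdef
  set sec : Fin (2 * n + 1) := ⟨2 * n - 1, by clear hn; omega⟩ with hsecdef
  have hpos : ∀ k, 0 < |η k| := fun k => lt_of_lt_of_le (by positivity) (hη k).1
  set a : ℝ := |η lst| with hadef
  set b : ℝ := |η sec| with hbdef
  have ha : 0 < a := hpos lst
  have hb : 0 < b := hpos sec
  have hsec_ne : sec ≠ lst := by
    simp only [hsecdef, hlstdef, Fin.ne_iff_vne, Fin.val_last]
    omega
  have hsecle : sec ≤ lst := by
    simp only [hsecdef, hlstdef, Fin.le_def, Fin.val_last]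
    omega
  have h2pow : (2:ℝ) ^ (j sec) ≤ (2:ℝ) ^ (j lst) :=
    zpow_le_zpow_right₀ one_le_two (hj hsecle)
  have hbample : b ≤ (64 / 25) * a := by
    have h1 : b ≤ (8/5 : ℝ) * 2 ^ (j sec) := (hη sec).2
    have h2 : (5/8 : ℝ) * 2 ^ (j lst) ≤ a := (hη lst).1
    nlinarith
  set m : ℝ := min a b with hmdef
  set M : ℝ := max a b with hMdef
  have hm : 0 < m := lt_min ha hb
  obtain ⟨H, hHle, hHint, hHval⟩ := core_bound hm min_le_max
  have hsec_mem : sec ∈ Finset.univ.erase lst :=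
    Finset.mem_erase.mpr ⟨hsec_ne, Finset.mem_univ _⟩
  set T : Finset (Fin (2 * n + 1)) := (Finset.univ.erase lst).erase sec with hTdef
  set P : ℝ := ∏ k ∈ T, |η k| with hPdef
  have hP : 0 ≤ P := Finset.prod_nonneg fun k _ => abs_nonneg _
  have hcardT : T.card = 2 * n - 1 := by
    rw [hTdef, Finset.card_erase_of_mem hsec_mem,
      Finset.card_erase_of_mem (Finset.mem_univ _), Finset.card_univ, Fintype.card_fin]
    omega
  -- pointwise bound
  have hkey : ∀ ζ : ℝ, ‖(∏ k, (1 - Complex.exp (Complex.I * η k * ζ))) /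
      ((|ζ| : ℝ) : ℂ) ^ (2 * n + 1)‖
      ≤ ((2:ℝ) ^ (2 * n + 1) * P) * (min (m * |ζ|) 1 * min (M * |ζ|) 1 / ζ ^ 2) := by
    intro ζ
    rcases eq_or_ne ζ 0 with rfl | hz
    · have hzero : ∀ k : Fin (2 * n + 1),
          (1 : ℂ) - Complex.exp (Complex.I * η k * ((0:ℝ):ℂ)) = 0 := by
        intro k; simp
      rw [Finset.prod_congr rfl (fun k _ => hzero k)]
      simp
    · have habs : 0 < |ζ| := abs_pos.mpr hz
      have hden : ‖(((|ζ|:ℝ)):ℂ) ^ (2 * n + 1)‖ = |ζ| ^ (2 * n + 1) := by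
        simp only [norm_pow, Complex.norm_real, Real.norm_eq_abs, abs_abs]
      rw [norm_div, hden]
      have hbound : ∀ k : Fin (2 * n + 1),
          ‖(1 : ℂ) - Complex.exp (Complex.I * η k * ζ)‖ ≤ 2 * min (|η k| * |ζ|) 1 := by
        intro k
        have h := norm_one_sub_exp_le (η k * ζ)
        have hco : (Complex.I * ((η k * ζ : ℝ) : ℂ)) = Complex.I * η k * ζ := by
          push_cast; ring
        rw [hco] at h
        rwa [abs_mul] at h
      have hnum : ‖∏ k, ((1 : ℂ) - Complex.exp (Complex.I * η k * ζ))‖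
          ≤ (2:ℝ) ^ (2 * n + 1) *
            (min (a * |ζ|) 1 * (min (b * |ζ|) 1 * (P * |ζ| ^ (2 * n - 1)))) := by
        calc ‖∏ k, ((1 : ℂ) - Complex.exp (Complex.I * η k * ζ))‖
            = ∏ k, ‖(1 : ℂ) - Complex.exp (Complex.I * η k * ζ)‖ := norm_prod _ _
          _ ≤ ∏ k, (2 * min (|η k| * |ζ|) 1) :=
              Finset.prod_le_prod (fun k _ => norm_nonneg _) (fun k _ => hbound k)
          _ = (2:ℝ) ^ (2 * n + 1) * ∏ k, min (|η k| * |ζ|) 1 := by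
              rw [Finset.prod_mul_distrib, Finset.prod_const, Finset.card_univ,
                Fintype.card_fin]
          _ = (2:ℝ) ^ (2 * n + 1) * (min (a * |ζ|) 1 *
                (min (b * |ζ|) 1 * ∏ k ∈ T, min (|η k| * |ζ|) 1)) := by
              rw [← Finset.mul_prod_erase _ _ (Finset.mem_univ lst),
                ← Finset.mul_prod_erase _ _ hsec_mem]
          _ ≤ (2:ℝ) ^ (2 * n + 1) * (min (a * |ζ|) 1 *
                (min (b * |ζ|) 1 * (P * |ζ| ^ (2 * n - 1)))) := by
              have h5 : ∏ k ∈ T, min (|η k| * |ζ|) 1 ≤ P * |ζ| ^ (2 * n - 1) := by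
                calc ∏ k ∈ T, min (|η k| * |ζ|) 1 ≤ ∏ k ∈ T, (|η k| * |ζ|) :=
                    Finset.prod_le_prod (fun k _ => le_min (by positivity) zero_le_one)
                      (fun k _ => min_le_left _ _)
                  _ = P * |ζ| ^ (2 * n - 1) := by
                    rw [Finset.prod_mul_distrib, Finset.prod_const, hcardT]
              have hx : (0:ℝ) ≤ min (a * |ζ|) 1 := le_min (by positivity) zero_le_one
              have hy : (0:ℝ) ≤ min (b * |ζ|) 1 := le_min (by positivity) zero_le_one
              have h2p : (0:ℝ) ≤ (2:ℝ) ^ (2 * n + 1) := by positivity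
              nlinarith [mul_le_mul_of_nonneg_left h5 hy,
                mul_le_mul_of_nonneg_left (mul_le_mul_of_nonneg_left h5 hy) hx,
                mul_le_mul_of_nonneg_left
                  (mul_le_mul_of_nonneg_left (mul_le_mul_of_nonneg_left h5 hy) hx) h2p]
      have hab : min (a * |ζ|) 1 * min (b * |ζ|) 1 = min (m * |ζ|) 1 * min (M * |ζ|) 1 := by
        rcases le_total a b with h | h
        · rw [hmdef, hMdef, min_eq_left h, max_eq_right h]
        · rw [hmdef, hMdef, min_eq_right h, max_eq_left h]
          exact mul_comm _ _
      have hsplitpow : |ζ| ^ (2 * n + 1) = |ζ| ^ (2 * n - 1) * ζ ^ 2 := by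
        rw [← sq_abs ζ, ← pow_add]
        congr 1
        omega
      have hposden : (0:ℝ) < |ζ| ^ (2 * n + 1) := by positivity
      calc ‖∏ k, ((1 : ℂ) - Complex.exp (Complex.I * η k * ζ))‖ / |ζ| ^ (2 * n + 1)
          ≤ ((2:ℝ) ^ (2 * n + 1) *
              (min (a * |ζ|) 1 * (min (b * |ζ|) 1 * (P * |ζ| ^ (2 * n - 1)))))
              / |ζ| ^ (2 * n + 1) := by
            exact div_le_div_of_nonneg_right hnum hposden.le
        _ = ((2:ℝ) ^ (2 * n + 1) * P) * (min (m * |ζ|) 1 * min (M * |ζ|) 1 / ζ ^ 2) := by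
            rw [← hab, hsplitpow]
            have h1 : (|ζ| : ℝ) ^ (2 * n - 1) ≠ 0 := by positivity
            have h2 : (ζ : ℝ) ^ 2 ≠ 0 := pow_ne_zero _ hz
            field_simp
  -- integrate
  have hl64 := log_64_25_lt_one
  have hden64 : (0:ℝ) < 1 - Real.log (64 / 25) := by linarith
  set C0 : ℝ := 2 / (1 - Real.log (64 / 25)) with hC0def
  have hC0pos : 0 < C0 := by positivity
  have hC0mul : C0 * (1 - Real.log (64 / 25)) = 2 := div_mul_cancel₀ 2 hden64.ne'
  have hchain : ‖∫ ζ : ℝ, (∏ k, (1 - Complex.exp (Complex.I * η k * ζ))) /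
      ((|ζ| : ℝ) : ℂ) ^ (2 * n + 1)‖
      ≤ ((2:ℝ) ^ (2 * n + 1) * P) * (4 * m * (1 + Real.log (M / m))) := by
    have h1 := norm_integral_le_integral_norm (μ := volume)
      (f := fun ζ : ℝ => (∏ k, ((1:ℂ) - Complex.exp (Complex.I * η k * ζ))) /
        ((|ζ| : ℝ) : ℂ) ^ (2 * n + 1))
    have hGint : Integrable (fun ζ : ℝ => ((2:ℝ) ^ (2 * n + 1) * P) * H ζ) :=
      hHint.const_mul _
    have h2 : ∫ ζ : ℝ, ‖(∏ k, ((1:ℂ) - Complex.exp (Complex.I * η k * ζ))) /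
        ((|ζ| : ℝ) : ℂ) ^ (2 * n + 1)‖
        ≤ ∫ ζ : ℝ, ((2:ℝ) ^ (2 * n + 1) * P) * H ζ := by
      apply integral_mono_of_nonneg
        (Filter.Eventually.of_forall fun ζ => norm_nonneg _) hGint
      apply Filter.Eventually.of_forall
      intro ζ
      exact (hkey ζ).trans (mul_le_mul_of_nonneg_left (hHle ζ) (by positivity))
    have h3 : ∫ ζ : ℝ, ((2:ℝ) ^ (2 * n + 1) * P) * H ζ
        = ((2:ℝ) ^ (2 * n + 1) * P) * ∫ ζ : ℝ, H ζ := integral_const_mul _ _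
    have h4 : ((2:ℝ) ^ (2 * n + 1) * P) * ∫ ζ : ℝ, H ζ
        ≤ ((2:ℝ) ^ (2 * n + 1) * P) * (4 * m * (1 + Real.log (M / m))) :=
      mul_le_mul_of_nonneg_left hHval (by positivity)
    linarith [h1.trans (h2.trans_eq h3)]
  -- compare the right-hand sides
  have hprodsplit : ∏ k ∈ Finset.univ.erase lst, |η k| = b * P :=
    (Finset.mul_prod_erase _ _ hsec_mem).symm
  have key_cmp : m * (1 + Real.log (M / m)) ≤ C0 * (b * (1 + Real.log (a / b))) := by
    rcases le_total b a with h | h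
    · have hm' : m = b := min_eq_right h
      have hM' : M = a := max_eq_left h
      rw [hm', hM']
      have hlog : 0 ≤ Real.log (a / b) := Real.log_nonneg ((one_le_div hb).2 h)
      have hC0ge : 1 ≤ C0 := by
        rw [hC0def, le_div_iff₀ hden64]
        have := Real.log_nonneg (by norm_num : (1:ℝ) ≤ 64 / 25)
        linarith
      nlinarith [mul_nonneg (sub_nonneg.2 hC0ge)
        (mul_nonneg hb.le (by linarith : (0:ℝ) ≤ 1 + Real.log (a / b)))]
    · have hm' : m = a := min_eq_left h
      have hM' : M = b := max_eq_right h
      rw [hm', hM']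
      have hba' : b / a ≤ 64 / 25 := by
        rw [div_le_iff₀ ha]
        linarith
      have hL : Real.log (b / a) ≤ Real.log (64 / 25) :=
        Real.log_le_log (by positivity) hba'
      have hLnn : 0 ≤ Real.log (b / a) := Real.log_nonneg ((one_le_div ha).2 h)
      have hflip : Real.log (a / b) = - Real.log (b / a) := by
        rw [Real.log_div ha.ne' hb.ne', Real.log_div hb.ne' ha.ne']
        ring
      rw [hflip]
      calc a * (1 + Real.log (b / a)) ≤ a * (1 + Real.log (64 / 25)) := by
            nlinarith [mul_nonneg ha.le (sub_nonneg.2 hL)]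
        _ ≤ 2 * a := by nlinarith [mul_nonneg ha.le (sub_nonneg.2 hl64.le)]
        _ ≤ 2 * b := by linarith
        _ = C0 * (1 - Real.log (64 / 25)) * b := by rw [hC0mul]
        _ ≤ C0 * (1 - Real.log (b / a)) * b := by
            nlinarith [mul_nonneg (mul_nonneg hC0pos.le (sub_nonneg.2 hL)) hb.le]
        _ = C0 * (b * (1 + -Real.log (b / a))) := by ring
  calc ‖∫ ζ : ℝ, (∏ k, (1 - Complex.exp (Complex.I * η k * ζ))) /
      ((|ζ| : ℝ) : ℂ) ^ (2 * n + 1)‖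
      ≤ ((2:ℝ) ^ (2 * n + 1) * P) * (4 * m * (1 + Real.log (M / m))) := hchain
    _ = (4 * (2:ℝ) ^ (2 * n + 1) * P) * (m * (1 + Real.log (M / m))) := by ring
    _ ≤ (4 * (2:ℝ) ^ (2 * n + 1) * P) * (C0 * (b * (1 + Real.log (a / b)))) :=
        mul_le_mul_of_nonneg_left key_cmp (by positivity)
    _ = ((2:ℝ) ^ (2 * n + 1) * 4 * C0) * (b * P) * (1 + Real.log (a / b)) := by ring
    _ = ((2:ℝ) ^ (2 * n + 1) * 4 * C0) * (∏ k ∈ Finset.univ.erase lst, |η k|) *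
        (1 + Real.log (a / b)) := by rw [hprodsplit]

end helpers

/-- Bound for the multilinear symbol `𝐓_n`: if the frequencies `η_k` are sorted into
nondecreasing dyadic blocks `|η_k| ∈ [(5/8)2^{j_k}, (8/5)2^{j_k}]` with `j` monotone, then
`|𝐓_n(η)| ≤ C(n) (∏_{k=1}^{2n} |η_k|)(1 + log(|η_{2n+1}|/|η_{2n}|))`; in particular, if
the top two frequencies are comparable (`|η_{2n+1}|/|η_{2n}| ≤ K`), then `𝐓_n` is bounded
by the product of the `2n` smallest frequencies. -/
theorem stmt19 (n : ℕ) (hn : 1 ≤ n) :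
    (∃ C > (0 : ℝ), ∀ (j : Fin (2 * n + 1) → ℤ) (η : Fin (2 * n + 1) → ℝ),
      Monotone j →
      (∀ k, |η k| ∈ Set.Icc ((5 / 8 : ℝ) * 2 ^ j k) ((8 / 5 : ℝ) * 2 ^ j k)) →
      ‖∫ ζ : ℝ, (∏ k, (1 - Complex.exp (Complex.I * η k * ζ))) /
          ((|ζ| : ℝ) : ℂ) ^ (2 * n + 1)‖
        ≤ C * (∏ k ∈ Finset.univ.erase (Fin.last (2 * n)), |η k|) *
            (1 + Real.log (|η (Fin.last (2 * n))| / |η ⟨2 * n - 1, by omega⟩|))) ∧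
    ∀ K > (0 : ℝ), ∃ C > (0 : ℝ),
      ∀ (j : Fin (2 * n + 1) → ℤ) (η : Fin (2 * n + 1) → ℝ),
      Monotone j →
      (∀ k, |η k| ∈ Set.Icc ((5 / 8 : ℝ) * 2 ^ j k) ((8 / 5 : ℝ) * 2 ^ j k)) →
      |η (Fin.last (2 * n))| / |η ⟨2 * n - 1, by omega⟩| ≤ K →
      ‖∫ ζ : ℝ, (∏ k, (1 - Complex.exp (Complex.I * η k * ζ))) /
          ((|ζ| : ℝ) : ℂ) ^ (2 * n + 1)‖
        ≤ C * ∏ k ∈ Finset.univ.erase (Fin.last (2 * n)), |η k| := by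
  have hl64 := log_64_25_lt_one
  have hden64 : (0:ℝ) < 1 - Real.log (64 / 25) := by linarith
  set C : ℝ := (2:ℝ) ^ (2 * n + 1) * 4 * (2 / (1 - Real.log (64 / 25))) with hCdef
  have hCpos : 0 < C := by positivity
  constructor
  · exact ⟨C, hCpos, fun j η hj hη => main_est n hn j η hj hη⟩
  · intro K hK
    refine ⟨C * (1 + max 0 (Real.log K)), by positivity, fun j η hj hη hKle => ?_⟩
    have hpos : ∀ k, 0 < |η k| := fun k => lt_of_lt_of_le (by positivity) (hη k).1
    have hab : 0 < |η (Fin.last (2 * n))| / |η ⟨2 * n - 1, by omega⟩| :=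
      div_pos (hpos _) (hpos _)
    have hlogle : Real.log (|η (Fin.last (2 * n))| / |η ⟨2 * n - 1, by omega⟩|)
        ≤ max 0 (Real.log K) :=
      le_max_of_le_right (Real.log_le_log hab hKle)
    have hprod : 0 ≤ ∏ k ∈ Finset.univ.erase (Fin.last (2 * n)), |η k| :=
      Finset.prod_nonneg fun k _ => abs_nonneg _
    have h1 := main_est n hn j η hj hη
    calc ‖∫ ζ : ℝ, (∏ k, (1 - Complex.exp (Complex.I * η k * ζ))) /
        ((|ζ| : ℝ) : ℂ) ^ (2 * n + 1)‖
        ≤ C * (∏ k ∈ Finset.univ.erase (Fin.last (2 * n)), |η k|) *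
            (1 + Real.log (|η (Fin.last (2 * n))| / |η ⟨2 * n - 1, by omega⟩|)) := h1
      _ ≤ C * (∏ k ∈ Finset.univ.erase (Fin.last (2 * n)), |η k|) *
            (1 + max 0 (Real.log K)) := by
          apply mul_le_mul_of_nonneg_left (by linarith) (by positivity)
      _ = C * (1 + max 0 (Real.log K)) *
            ∏ k ∈ Finset.univ.erase (Fin.last (2 * n)), |η k| := by ring
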